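/- Let q ≥ 2 and let 𝓛 be a set of lines of PG(7,q^3) satisfying properties (Pt), (Pl) and (Sd). Then no four lines of 𝓛 form a quadrangle; that is, there do not exist four distinct lines L1, L2, L3, L4 of 𝓛 such that cyclically consecutive lines (L1 and L2, L2 and L3, L3 and L4, L4 and L1) meet while the two pairs of non-consecutive lines (L1 and L3, L2 and L4) have zero intersection. -/

import Mathlib

open Module

/-- If two distinct planes (finrank-2 subspaces) meet nontrivially, their inf has finrank 1. -/
private lemma quad_inf_rank_one {F V : Type*} [Field F] [AddCommGroup V] [Module F V]
    [FiniteDimensional F V] {L L' : Submodule F V}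
    (hL : finrank F L = 2) (hL' : finrank F L' = 2) (hne : L ≠ L') (hmeet : L ⊓ L' ≠ ⊥) :
    finrank F ↥(L ⊓ L') = 1 := by
  have h1 : finrank F ↥(L ⊓ L') ≠ 0 := by
    rw [Ne, Submodule.finrank_eq_zero]; exact hmeet
  have h2 : finrank F ↥(L ⊓ L') < 2 := by
    rcases lt_or_eq_of_le (inf_le_left : L ⊓ L' ≤ L) with h | h
    · calc finrank F ↥(L ⊓ L') < finrank F L := Submodule.finrank_lt_finrank_of_lt h
        _ = 2 := hL
    · have hle : L ≤ L' := h ▸ inf_le_right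
      exact absurd (Submodule.eq_of_le_of_finrank_eq hle (hL.trans hL'.symm)) hne
  omega

private lemma quad_sup_rank_three {F V : Type*} [Field F] [AddCommGroup V] [Module F V]
    [FiniteDimensional F V] {L L' : Submodule F V}
    (hL : finrank F L = 2) (hL' : finrank F L' = 2) (hne : L ≠ L') (hmeet : L ⊓ L' ≠ ⊥) :
    finrank F ↥(L ⊔ L') = 3 := by
  have := Submodule.finrank_sup_add_finrank_inf_eq L L'
  rw [quad_inf_rank_one hL hL' hne hmeet, hL, hL'] at this
  omega

/-- Two distinct finrank-2 subspaces have sup of finrank at least 3. -/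
private lemma quad_sup_rank_ge_three {F V : Type*} [Field F] [AddCommGroup V] [Module F V]
    [FiniteDimensional F V] {L L' : Submodule F V}
    (hL : finrank F L = 2) (hL' : finrank F L' = 2) (hne : L ≠ L') :
    3 ≤ finrank F ↥(L ⊔ L') := by
  have hs := Submodule.finrank_sup_add_finrank_inf_eq L L'
  rw [hL, hL'] at hs
  have h2 : finrank F ↥(L ⊓ L') < 2 := by
    rcases lt_or_eq_of_le (inf_le_left : L ⊓ L' ≤ L) with h | h
    · calc finrank F ↥(L ⊓ L') < finrank F L := Submodule.finrank_lt_finrank_of_lt h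
        _ = 2 := hL
    · have hle : L ≤ L' := h ▸ inf_le_right
      exact absurd (Submodule.eq_of_le_of_finrank_eq hle (hL.trans hL'.symm)) hne
  omega

/-- A set of lines of PG(7,q³) satisfying (Pt), (Pl) and (Sd) contains
no quadrangle: no four distinct lines in which cyclically consecutive lines meet
while the two pairs of non-consecutive lines have zero intersection. -/
theorem no_quadrangle_of_Pt_Pl_Sd
    (q : ℕ) (hq : 2 ≤ q) (F : Type) [Field F] [Fintype F]
    (hF : Fintype.card F = q ^ 3)
    (𝓛 : Set (Submodule F (Fin 8 → F)))
    (hline : ∀ L ∈ 𝓛, Module.finrank F L = 2)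
    (hPt : ∀ p : Submodule F (Fin 8 → F), Module.finrank F p = 1 →
      {L | L ∈ 𝓛 ∧ p ≤ L}.ncard = 0 ∨ {L | L ∈ 𝓛 ∧ p ≤ L}.ncard = q + 1)
    (hPl : ∀ π : Submodule F (Fin 8 → F), Module.finrank F π = 3 →
      {L | L ∈ 𝓛 ∧ L ≤ π}.ncard = 0 ∨ {L | L ∈ 𝓛 ∧ L ≤ π}.ncard = 1 ∨
        {L | L ∈ 𝓛 ∧ L ≤ π}.ncard = q + 1)
    (hSd : ∀ S : Submodule F (Fin 8 → F), Module.finrank F S = 4 →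
      {L | L ∈ 𝓛 ∧ L ≤ S}.ncard = 0 ∨ {L | L ∈ 𝓛 ∧ L ≤ S}.ncard = 1 ∨
        {L | L ∈ 𝓛 ∧ L ≤ S}.ncard = q + 1 ∨ {L | L ∈ 𝓛 ∧ L ≤ S}.ncard = 2 * q + 1) :
    ¬ ∃ L₁ L₂ L₃ L₄ : Submodule F (Fin 8 → F),
      L₁ ∈ 𝓛 ∧ L₂ ∈ 𝓛 ∧ L₃ ∈ 𝓛 ∧ L₄ ∈ 𝓛 ∧
      L₁ ≠ L₂ ∧ L₁ ≠ L₃ ∧ L₁ ≠ L₄ ∧ L₂ ≠ L₃ ∧ L₂ ≠ L₄ ∧ L₃ ≠ L₄ ∧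
      L₁ ⊓ L₂ ≠ ⊥ ∧ L₂ ⊓ L₃ ≠ ⊥ ∧ L₃ ⊓ L₄ ≠ ⊥ ∧ L₄ ⊓ L₁ ≠ ⊥ ∧
      L₁ ⊓ L₃ = ⊥ ∧ L₂ ⊓ L₄ = ⊥ := by
  rintro ⟨L₁, L₂, L₃, L₄, hL₁, hL₂, hL₃, hL₄, h12ne, h13ne, h14ne, h23ne, h24ne, h34ne,
    h12, h23, h34, h41, h13, h24⟩
  have r₁ := hline L₁ hL₁
  have r₂ := hline L₂ hL₂
  have r₃ := hline L₃ hL₃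
  have r₄ := hline L₄ hL₄
  -- the solid S = L₁ ⊔ L₃ has finrank 4
  set S : Submodule F (Fin 8 → F) := L₁ ⊔ L₃ with hS
  have hSr : finrank F S = 4 := by
    rw [hS]
    have := Submodule.finrank_sup_add_finrank_inf_eq L₁ L₃
    rw [h13, finrank_bot, r₁, r₃] at this
    omega
  -- L₂ ≤ S and L₄ ≤ S
  have hsub : ∀ L : Submodule F (Fin 8 → F), L ∈ 𝓛 → L ≠ L₁ → L ≠ L₃ →
      L ⊓ L₁ ≠ ⊥ → L ⊓ L₃ ≠ ⊥ → L ≤ S := by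
    intro L hL hne1 hne3 hm1 hm3
    have rL := hline L hL
    have hp : finrank F ↥(L ⊓ L₁) = 1 := quad_inf_rank_one rL r₁ hne1 hm1
    have hr : finrank F ↥(L ⊓ L₃) = 1 := quad_inf_rank_one rL r₃ hne3 hm3
    have hpr : L ⊓ L₁ ≠ L ⊓ L₃ := by
      intro h
      apply hm1
      have : L ⊓ L₁ ≤ L₁ ⊓ L₃ := le_inf inf_le_right (h ▸ inf_le_right)
      rw [h13] at this
      exact le_bot_iff.mp this
    -- (L ⊓ L₁) ⊔ (L ⊓ L₃) has finrank 2 and is ≤ L, so = L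
    have hsup : finrank F ↥((L ⊓ L₁) ⊔ (L ⊓ L₃)) = 2 := by
      have hs := Submodule.finrank_sup_add_finrank_inf_eq (L ⊓ L₁) (L ⊓ L₃)
      have hinf : finrank F ↥((L ⊓ L₁) ⊓ (L ⊓ L₃)) = 0 := by
        rcases lt_or_eq_of_le (inf_le_left : (L ⊓ L₁) ⊓ (L ⊓ L₃) ≤ L ⊓ L₁) with h | h
        · have := Submodule.finrank_lt_finrank_of_lt h
          omega
        · have hle : L ⊓ L₁ ≤ L ⊓ L₃ := h ▸ inf_le_right
          exact absurd (Submodule.eq_of_le_of_finrank_eq hle (hp.trans hr.symm)) hpr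
      rw [hp, hr, hinf] at hs
      omega
    have hle : (L ⊓ L₁) ⊔ (L ⊓ L₃) ≤ L := sup_le inf_le_left inf_le_left
    have hEq : (L ⊓ L₁) ⊔ (L ⊓ L₃) = L :=
      Submodule.eq_of_le_of_finrank_eq hle (hsup.trans rL.symm)
    rw [← hEq]
    exact sup_le (inf_le_right.trans le_sup_left) (inf_le_right.trans le_sup_right)
  have hL₂S : L₂ ≤ S := hsub L₂ hL₂ (Ne.symm h12ne) h23ne
    (by rwa [inf_comm]) h23
  have hL₄S : L₄ ≤ S := hsub L₄ hL₄ (Ne.symm h14ne) (Ne.symm h34ne)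
    h41 (by rwa [inf_comm])
  have hL₁S : L₁ ≤ S := le_sup_left
  have hL₃S : L₃ ≤ S := le_sup_right
  -- the three planes
  set π₁ : Submodule F (Fin 8 → F) := L₁ ⊔ L₂ with hπ₁
  set π₂ : Submodule F (Fin 8 → F) := L₂ ⊔ L₃ with hπ₂
  set π₃ : Submodule F (Fin 8 → F) := L₃ ⊔ L₄ with hπ₃
  have hπ₁r : finrank F π₁ = 3 := quad_sup_rank_three r₁ r₂ h12ne h12
  have hπ₂r : finrank F π₂ = 3 := quad_sup_rank_three r₂ r₃ h23ne h23
  have hπ₃r : finrank F π₃ = 3 := quad_sup_rank_three r₃ r₄ h34ne h34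
  -- planes pairwise distinct
  have hplane_ne : ∀ π π' : Submodule F (Fin 8 → F), finrank F π = 3 → finrank F π' = 3 →
      ∀ M M' : Submodule F (Fin 8 → F), M ≤ π → M' ≤ π' →
      finrank F ↥(M ⊔ M') = 4 → π ≠ π' := by
    intro π π' hπ hπ' M M' hM hM' hMM' h
    subst h
    have : M ⊔ M' ≤ π := sup_le hM hM'
    have := Submodule.finrank_mono this
    omega
  have hππ12 : π₁ ≠ π₂ :=
    hplane_ne π₁ π₂ hπ₁r hπ₂r L₁ L₃ le_sup_left le_sup_right hSr
  have hππ13 : π₁ ≠ π₃ :=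
    hplane_ne π₁ π₃ hπ₁r hπ₃r L₁ L₃ le_sup_left le_sup_left hSr
  have hππ23 : π₂ ≠ π₃ := by
    have h24r : finrank F ↥(L₂ ⊔ L₄) = 4 := by
      have := Submodule.finrank_sup_add_finrank_inf_eq L₂ L₄
      rw [h24, finrank_bot, r₂, r₄] at this
      omega
    exact hplane_ne π₂ π₃ hπ₂r hπ₃r L₂ L₄ le_sup_left le_sup_right h24r
  -- the line sets of the planes
  have hfin : ∀ s : Set (Submodule F (Fin 8 → F)), s.Finite := fun s => Set.toFinite s
  set A : Set (Submodule F (Fin 8 → F)) := {L | L ∈ 𝓛 ∧ L ≤ π₁} with hA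
  set B : Set (Submodule F (Fin 8 → F)) := {L | L ∈ 𝓛 ∧ L ≤ π₂} with hB
  set C : Set (Submodule F (Fin 8 → F)) := {L | L ∈ 𝓛 ∧ L ≤ π₃} with hC
  have hcard : ∀ (π : Submodule F (Fin 8 → F)), finrank F π = 3 →
      ∀ M M' : Submodule F (Fin 8 → F), M ∈ 𝓛 → M' ∈ 𝓛 → M ≤ π → M' ≤ π → M ≠ M' →
      {L | L ∈ 𝓛 ∧ L ≤ π}.ncard = q + 1 := by
    intro π hπ M M' hM hM' hMπ hM'π hne
    have h2 : 1 < {L | L ∈ 𝓛 ∧ L ≤ π}.ncard := by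
      rw [Set.one_lt_ncard_iff (hfin _)]
      exact ⟨M, M', ⟨hM, hMπ⟩, ⟨hM', hM'π⟩, hne⟩
    rcases hPl π hπ with h | h | h <;> omega
  have hAcard : A.ncard = q + 1 :=
    hcard π₁ hπ₁r L₁ L₂ hL₁ hL₂ le_sup_left le_sup_right h12ne
  have hBcard : B.ncard = q + 1 :=
    hcard π₂ hπ₂r L₂ L₃ hL₂ hL₃ le_sup_left le_sup_right h23ne
  have hCcard : C.ncard = q + 1 :=
    hcard π₃ hπ₃r L₃ L₄ hL₃ hL₄ le_sup_left le_sup_right h34ne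
  -- two distinct planes share at most one line of 𝓛
  have hinter : ∀ π π' : Submodule F (Fin 8 → F), finrank F π = 3 → finrank F π' = 3 →
      π ≠ π' → ({L | L ∈ 𝓛 ∧ L ≤ π} ∩ {L | L ∈ 𝓛 ∧ L ≤ π'}).ncard ≤ 1 := by
    intro π π' hπ hπ' hne
    rw [Set.ncard_le_one (hfin _)]
    rintro M ⟨⟨hM, hMπ⟩, _, hMπ'⟩ M' ⟨⟨hM', hM'π⟩, _, hM'π'⟩
    by_contra hMM'
    have h3 : 3 ≤ finrank F ↥(M ⊔ M') :=
      quad_sup_rank_ge_three (hline M hM) (hline M' hM') hMM'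
    have hle : M ⊔ M' ≤ π ⊓ π' := sup_le (le_inf hMπ hMπ') (le_inf hM'π hM'π')
    have hlt : π ⊓ π' < π := lt_of_le_of_ne inf_le_left (by
      intro h
      exact hne (le_antisymm (h ▸ inf_le_right)
        (Submodule.eq_of_le_of_finrank_eq (h ▸ inf_le_right) (hπ.trans hπ'.symm) ▸ le_refl π')))
    have h1 := Submodule.finrank_mono hle
    have h2 := Submodule.finrank_lt_finrank_of_lt hlt
    omega
  have hAB : (A ∩ B).ncard ≤ 1 := hinter π₁ π₂ hπ₁r hπ₂r hππ12
  have hAC : (A ∩ C).ncard ≤ 1 := hinter π₁ π₃ hπ₁r hπ₃r hππ13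
  have hBC : (B ∩ C).ncard ≤ 1 := hinter π₂ π₃ hπ₂r hπ₃r hππ23
  -- counting in the solid
  set D : Set (Submodule F (Fin 8 → F)) := {L | L ∈ 𝓛 ∧ L ≤ S} with hD
  have hsubS : A ∪ B ∪ C ⊆ D := by
    rintro L ((⟨hL, hLπ⟩ | ⟨hL, hLπ⟩) | ⟨hL, hLπ⟩)
    · exact ⟨hL, hLπ.trans (sup_le hL₁S hL₂S)⟩
    · exact ⟨hL, hLπ.trans (sup_le hL₂S hL₃S)⟩
    · exact ⟨hL, hLπ.trans (sup_le hL₃S hL₄S)⟩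
  have hUnion1 : (A ∪ B).ncard + (A ∩ B).ncard = A.ncard + B.ncard :=
    Set.ncard_union_add_ncard_inter A B (hfin _) (hfin _)
  have hUnion2 : (A ∪ B ∪ C).ncard + ((A ∪ B) ∩ C).ncard = (A ∪ B).ncard + C.ncard :=
    Set.ncard_union_add_ncard_inter (A ∪ B) C (hfin _) (hfin _)
  have hABC : ((A ∪ B) ∩ C).ncard ≤ 2 := by
    have hsub : (A ∪ B) ∩ C ⊆ (A ∩ C) ∪ (B ∩ C) := by
      rintro L ⟨hL | hL, hLC⟩
      · exact Or.inl ⟨hL, hLC⟩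
      · exact Or.inr ⟨hL, hLC⟩
    calc ((A ∪ B) ∩ C).ncard ≤ ((A ∩ C) ∪ (B ∩ C)).ncard := Set.ncard_le_ncard hsub (hfin _)
      _ ≤ (A ∩ C).ncard + (B ∩ C).ncard := Set.ncard_union_le _ _
      _ ≤ 2 := by omega
  have hDge : 3 * q ≤ D.ncard := by
    have := Set.ncard_le_ncard hsubS (hfin D)
    omega
  rcases hSd S hSr with h | h | h | h <;> rw [← hD] at h <;> omega
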